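/- (Lemma 1, Chernoff-type probability bound) Let n ≥ 1, l ≥ 1 be integers, and let B ∈ ℝ^{n×l} be a fixed matrix such that the geometric mean of the diagonal entries of (1/n)·BᵀB equals α > 0, i.e., (∏_{i=1}^l [(1/n)BᵀB]_{i,i})^{1/l} = α. Let S ⊆ [l] be fixed, and let D ∈ ℝ^{n×l} be a random matrix with mutually independent columns such that for j ∈ S the j-th column D_j is distributed N(0, θ_j·I_n) with some θ_j > 0, and for j ∈ [l]∖S the j-th column D_j is identically zero. Then for every γ ∈ (0, α): P( (1/(nl))·‖B − D‖_F² ≤ γ ) ≤ 2^{−(n/2)·log₂(α^l/γ^l)} = (γ/α)^{nl/2}. -/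

import Mathlib

open MeasureTheory ProbabilityTheory Matrix Real
open scoped NNReal ENNReal

section helpers

lemma my_integral_rexp_quadratic {b : ℝ} (hb : b < 0) (c d : ℝ) :
    ∫ x : ℝ, Real.exp (b * x ^ 2 + c * x + d)
      = (π / -b) ^ ((1:ℝ)/2) * Real.exp (d - c ^ 2 / (4 * b)) := by
  have h := integral_cexp_quadratic (b := (b : ℂ)) (by simpa using hb) (c : ℂ) (d : ℂ)
  have h1 : ∫ x : ℝ, Complex.exp ((b:ℂ) * x ^ 2 + c * x + d)
      = ∫ x : ℝ, ((Real.exp (b * x ^ 2 + c * x + d) : ℝ) : ℂ) := by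
    congr 1; ext x; push_cast [Complex.ofReal_exp]; ring_nf
  rw [h1] at h
  have h2 : ((π:ℂ) / -(b:ℂ)) ^ (1/2 : ℂ) = ((((π / -b : ℝ)) ^ ((1:ℝ)/2) : ℝ) : ℂ) := by
    rw [Complex.ofReal_cpow (div_nonneg pi_pos.le (by linarith))]
    push_cast; ring_nf
  have h3 : Complex.exp ((d:ℂ) - (c:ℂ) ^ 2 / (4 * (b:ℂ)))
      = ((Real.exp (d - c ^ 2 / (4 * b)) : ℝ) : ℂ) := by
    push_cast [Complex.ofReal_exp]; ring_nf
  rw [h2, h3, ← Complex.ofReal_mul] at h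
  have h4 : ∫ x : ℝ, ((Real.exp (b * x ^ 2 + c * x + d) : ℝ) : ℂ)
      = ((∫ x : ℝ, Real.exp (b * x ^ 2 + c * x + d) : ℝ) : ℂ) := integral_ofReal
  rw [h4] at h
  exact_mod_cast h

lemma entry_int (t : ℝ) (ht : 0 < t) (b : ℝ) (v : ℝ≥0) :
    ∫⁻ x : ℝ, ENNReal.ofReal (Real.exp (-(t * (b - x) ^ 2))) ∂(gaussianReal 0 v)
      = ENNReal.ofReal ((1 + 2 * t * (v:ℝ)) ^ (-(1:ℝ)/2)
          * Real.exp (-(t * b ^ 2 / (1 + 2 * t * (v:ℝ))))) := by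
  have hmeas : Measurable fun x : ℝ => ENNReal.ofReal (Real.exp (-(t * (b - x) ^ 2))) := by
    refine ENNReal.measurable_ofReal.comp ?_
    exact (Real.continuous_exp.comp (by continuity)).measurable
  rcases eq_or_ne v 0 with rfl | hv
  · rw [gaussianReal_zero_var, lintegral_dirac]
    norm_num
  · have hv' : (0:ℝ) < (v:ℝ) := by exact_mod_cast pos_iff_ne_zero.mpr hv
    set v' : ℝ := (v:ℝ)
    set u : ℝ := 1 + 2 * t * v' with hu
    have hu1 : (1:ℝ) ≤ u := by nlinarith
    have hu0 : (0:ℝ) < u := by linarith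
    rw [gaussianReal_of_var_ne_zero _ hv,
      lintegral_withDensity_eq_lintegral_mul _ (measurable_gaussianPDF 0 v) hmeas]
    have hre : ∀ x : ℝ, gaussianPDF 0 v x * ENNReal.ofReal (Real.exp (-(t * (b - x) ^ 2)))
        = ENNReal.ofReal (gaussianPDFReal 0 v x * Real.exp (-(t * (b - x) ^ 2))) := by
      intro x
      rw [gaussianPDF, ← ENNReal.ofReal_mul (gaussianPDFReal_nonneg 0 v x)]
    simp_rw [Pi.mul_apply, hre]
    have hint : Integrable (fun x : ℝ => gaussianPDFReal 0 v x * Real.exp (-(t * (b - x) ^ 2))) := by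
      refine (integrable_gaussianPDFReal 0 v).mono' ?_ ?_
      · exact ((stronglyMeasurable_gaussianPDFReal 0 v).mul
          ((Real.continuous_exp.comp (by continuity)).stronglyMeasurable)).aestronglyMeasurable
      · filter_upwards with x
        rw [Real.norm_eq_abs, abs_mul, abs_of_nonneg (gaussianPDFReal_nonneg 0 v x),
          abs_of_nonneg (Real.exp_nonneg _)]
        nlinarith [gaussianPDFReal_nonneg 0 v x, Real.exp_le_one_iff.mpr
          (neg_nonpos.mpr (by positivity : (0:ℝ) ≤ t * (b - x)^2))]
    rw [← ofReal_integral_eq_lintegral_ofReal hint ?nn]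
    case nn =>
      filter_upwards with x
      exact mul_nonneg (gaussianPDFReal_nonneg 0 v x) (Real.exp_nonneg _)
    congr 1
    -- real integral computation
    have hfun : (fun x : ℝ => gaussianPDFReal 0 v x * Real.exp (-(t * (b - x) ^ 2)))
        = fun x : ℝ => (Real.sqrt (2 * π * v'))⁻¹
            * Real.exp ((-(u / (2 * v'))) * x ^ 2 + (2 * t * b) * x + (-(t * b ^ 2))) := by
      funext x
      rw [gaussianPDFReal, mul_assoc, ← Real.exp_add]
      congr 2
      field_simp
      ring
    rw [hfun, integral_const_mul, my_integral_rexp_quadratic (neg_lt_zero.mpr (by positivity)) _ _]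
    rw [neg_neg]
    have hexp : -(t * b ^ 2) - (2 * t * b) ^ 2 / (4 * -(u / (2 * v')))
        = -(t * b ^ 2 / u) := by
      field_simp
      ring
    rw [hexp]
    rw [show π / (u / (2 * v')) = (2 * π * v') / u by field_simp]
    rw [Real.div_rpow (by positivity) hu0.le, Real.sqrt_eq_rpow]
    rw [show (-(1:ℝ)/2) = -((1:ℝ)/2) by norm_num, Real.rpow_neg hu0.le]
    have hne1 : ((2 * π * v') ^ ((1:ℝ)/2)) ≠ 0 := by positivity
    have hne2 : (u ^ ((1:ℝ)/2)) ≠ 0 := by positivity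
    field_simp

lemma my_lintegral_pi_prod : ∀ {m : ℕ} {E : Fin m → Type} [∀ i, MeasurableSpace (E i)]
    (μ : ∀ i, Measure (E i)) [∀ i, SigmaFinite (μ i)]
    (f : ∀ i, E i → ℝ≥0∞) (_ : ∀ i, Measurable (f i)),
    ∫⁻ x : ∀ i, E i, ∏ i, f i (x i) ∂Measure.pi μ = ∏ i, ∫⁻ x, f i x ∂μ i := by
  intro m
  induction m with
  | zero =>
      intro E _ μ _ f hf
      simp [Measure.pi_of_empty]
  | succ m ih =>
      intro E _ μ _ f hf
      rw [← ((measurePreserving_piFinSuccAbove μ 0).symm).lintegral_comp_emb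
        (MeasurableEquiv.measurableEmbedding _)]
      simp_rw [MeasurableEquiv.piFinSuccAbove_symm_apply, Fin.insertNthEquiv,
        Fin.prod_univ_succ, Fin.insertNth_zero, Equiv.coe_fn_mk,
        Fin.zero_succAbove, Fin.cons_zero, Fin.cons_succ]
      rw [← ih (fun j => μ j.succ) (fun j => f j.succ) (fun j => hf j.succ)]
      exact lintegral_prod_mul (μ := μ 0) (ν := Measure.pi fun j : Fin m => μ j.succ)
        (f := f 0) (g := fun y : (j : Fin m) → E j.succ => ∏ x : Fin m, f x.succ (y x))
        (hf 0).aemeasurable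
        (Finset.measurable_prod Finset.univ (fun i _ =>
          (hf i.succ).comp (measurable_pi_apply i))).aemeasurable

lemma xexp_le (x : ℝ) (hx : 0 ≤ x) : x * Real.exp (-x) ≤ Real.exp (-1) := by
  have h1 : x ≤ Real.exp (x - 1) := by
    have := Real.add_one_le_exp (x - 1); linarith
  calc x * Real.exp (-x) ≤ Real.exp (x - 1) * Real.exp (-x) :=
        mul_le_mul_of_nonneg_right h1 (Real.exp_nonneg _)
    _ = Real.exp (-1) := by rw [← Real.exp_add]; ring_nf

lemma col_ineq (n : ℕ) (γ aj u : ℝ) (hγ : 0 < γ) (haj : 0 < aj) (hu : 1 ≤ u) :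
    (u ^ (-(1:ℝ)/2)) ^ n * Real.exp (-(1/(2*γ) * ((n:ℝ) * aj) / u))
      ≤ (γ / aj) ^ ((n:ℝ)/2) * Real.exp (-((n:ℝ)/2)) := by
  have hu0 : (0:ℝ) < u := by linarith
  set x : ℝ := aj / (γ * u) with hxdef
  have hx : 0 < x := by positivity
  have base : u⁻¹ * Real.exp (-x) ≤ γ / aj * Real.exp (-1) := by
    have h2 : u⁻¹ = x * (γ / aj) := by rw [hxdef]; field_simp
    rw [h2]
    calc x * (γ / aj) * Real.exp (-x) = x * Real.exp (-x) * (γ / aj) := by ring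
      _ ≤ Real.exp (-1) * (γ / aj) :=
          mul_le_mul_of_nonneg_right (xexp_le x hx.le) (by positivity)
      _ = γ / aj * Real.exp (-1) := by ring
  have hL : (u ^ (-(1:ℝ)/2)) ^ n * Real.exp (-(1/(2*γ) * ((n:ℝ) * aj) / u))
      = (u⁻¹ * Real.exp (-x)) ^ ((n:ℝ)/2) := by
    rw [Real.mul_rpow (by positivity) (Real.exp_nonneg _)]
    congr 1
    · rw [← Real.rpow_natCast (u ^ (-(1:ℝ)/2)) n, ← Real.rpow_mul hu0.le,
        Real.inv_rpow hu0.le, ← Real.rpow_neg hu0.le]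
      congr 1; ring
    · rw [← Real.exp_mul]
      congr 1
      rw [hxdef]
      field_simp
  have hR : (γ / aj * Real.exp (-1)) ^ ((n:ℝ)/2)
      = (γ / aj) ^ ((n:ℝ)/2) * Real.exp (-((n:ℝ)/2)) := by
    rw [Real.mul_rpow (by positivity) (Real.exp_nonneg _), ← Real.exp_mul]
    congr 2; ring
  rw [hL, ← hR]
  exact Real.rpow_le_rpow (by positivity) base (by positivity)

end helpers

/-- **Lemma 1** (Chernoff-type probability bound). Let `B` be a fixed `n × l` real matrix
whose diagonal entries of `(1/n) Bᵀ B` have geometric mean `α > 0`. Let `D` be a random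
`n × l` matrix with independent entries, where for `j ∈ S` the `j`-th column is
`N(0, θ_j I_n)` (`θ_j > 0`) and for `j ∉ S` the `j`-th column is identically zero
(variance `0`, i.e. a point mass at `0`). Then for every `γ ∈ (0, α)`,
`P((1/(nl)) ‖B − D‖_F² ≤ γ) ≤ (γ/α)^{nl/2}`. -/
theorem lemma1_chernoff_bound
    (n l : ℕ) (hn : 1 ≤ n) (hl : 1 ≤ l)
    (B : Matrix (Fin n) (Fin l) ℝ) (α : ℝ) (hα : 0 < α)
    (hmean : (∏ i : Fin l, (((1 : ℝ) / (n : ℝ)) • (Bᵀ * B)) i i) ^ ((1 : ℝ) / (l : ℝ)) = α)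
    (S : Finset (Fin l)) (θ : Fin l → ℝ≥0) (hθ : ∀ j ∈ S, 0 < θ j)
    (γ : ℝ) (hγ0 : 0 < γ) (hγα : γ < α) :
    (Measure.pi fun _ : Fin n =>
        Measure.pi fun j : Fin l => gaussianReal 0 (if j ∈ S then θ j else 0))
      {D : Fin n → Fin l → ℝ |
        (1 / ((n : ℝ) * (l : ℝ))) * ∑ i : Fin n, ∑ j : Fin l, (B i j - D i j) ^ 2 ≤ γ}
      ≤ ENNReal.ofReal ((γ / α) ^ (((n : ℝ) * (l : ℝ)) / 2)) := by
  have hn0 : (0:ℝ) < (n:ℝ) := by exact_mod_cast Nat.lt_of_lt_of_le Nat.zero_lt_one hn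
  have hl0 : (0:ℝ) < (l:ℝ) := by exact_mod_cast Nat.lt_of_lt_of_le Nat.zero_lt_one hl
  set t : ℝ := 1 / (2 * γ) with htdef
  have ht : 0 < t := by positivity
  set μ : Measure (Fin n → Fin l → ℝ) := Measure.pi fun _ : Fin n =>
      Measure.pi fun j : Fin l => gaussianReal 0 (if j ∈ S then θ j else 0) with hμdef
  set u : Fin l → ℝ := fun j => 1 + 2 * t * ((if j ∈ S then θ j else 0 : ℝ≥0) : ℝ) with hudef
  have hu1 : ∀ j, 1 ≤ u j := by
    intro j
    have h0 : (0:ℝ) ≤ ((if j ∈ S then θ j else 0 : ℝ≥0) : ℝ) := by positivity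
    simp only [hudef]
    nlinarith
  have hu0 : ∀ j, 0 < u j := fun j => lt_of_lt_of_le one_pos (hu1 j)
  -- diagonal entries
  set a : Fin l → ℝ := fun j => (((1:ℝ)/(n:ℝ)) • (Bᵀ * B)) j j with hadef
  have haval : ∀ j, a j = (1/(n:ℝ)) * ∑ i : Fin n, (B i j) ^ 2 := by
    intro j
    simp [hadef, Matrix.smul_apply, Matrix.mul_apply, Matrix.transpose_apply, pow_two,
      smul_eq_mul]
  have hanneg : ∀ j, 0 ≤ a j := by
    intro j; rw [haval]; positivity
  have hprodα : ∏ j : Fin l, a j = α ^ l := by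
    have h0 : (0:ℝ) ≤ ∏ j : Fin l, a j := Finset.prod_nonneg fun j _ => hanneg j
    have h1 := congrArg (fun x : ℝ => x ^ ((l:ℕ):ℝ)) hmean
    rw [← Real.rpow_mul h0, Real.rpow_natCast α l,
      show ((1:ℝ)/(l:ℝ)) * ((l:ℕ):ℝ) = 1 by field_simp, Real.rpow_one] at h1
    exact h1
  have hapos : ∀ j, 0 < a j := by
    intro j
    rcases (hanneg j).lt_or_eq with h | h
    · exact h
    · exfalso
      have : ∏ j : Fin l, a j = 0 := Finset.prod_eq_zero (Finset.mem_univ j) h.symm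
      rw [hprodα] at this
      exact absurd this (by positivity)
  -- the Chernoff integrand
  set g : (Fin n → Fin l → ℝ) → ℝ≥0∞ :=
    fun D => ∏ i : Fin n, ∏ j : Fin l,
      ENNReal.ofReal (Real.exp (-(t * (B i j - D i j) ^ 2))) with hgdef
  have hgeq : ∀ D, g D = ENNReal.ofReal
      (Real.exp (-(t * ∑ i : Fin n, ∑ j : Fin l, (B i j - D i j) ^ 2))) := by
    intro D
    have hsum : -(t * ∑ i : Fin n, ∑ j : Fin l, (B i j - D i j) ^ 2)
        = ∑ i : Fin n, ∑ j : Fin l, -(t * (B i j - D i j) ^ 2) := by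
      rw [Finset.mul_sum, ← Finset.sum_neg_distrib]
      refine Finset.sum_congr rfl fun i _ => ?_
      rw [Finset.mul_sum, ← Finset.sum_neg_distrib]
    rw [hsum, Real.exp_sum, ENNReal.ofReal_prod_of_nonneg fun i _ => by positivity]
    refine Finset.prod_congr rfl fun i _ => ?_
    rw [Real.exp_sum, ENNReal.ofReal_prod_of_nonneg fun j _ => by positivity]
  have hqm : ∀ (i : Fin n) (j : Fin l), Measurable fun D : Fin n → Fin l → ℝ =>
      ENNReal.ofReal (Real.exp (-(t * (B i j - D i j) ^ 2))) := by
    intro i j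
    have hDij : Measurable fun D : Fin n → Fin l → ℝ => D i j :=
      (measurable_pi_apply j).comp (measurable_pi_apply i)
    exact ENNReal.measurable_ofReal.comp (Real.measurable_exp.comp
      ((((measurable_const.sub hDij).pow_const 2).const_mul t).neg))
  have hgm : Measurable g :=
    Finset.measurable_prod _ fun i _ => Finset.measurable_prod _ fun j _ => hqm i j
  -- Markov / Chernoff step
  set ε : ℝ≥0∞ := ENNReal.ofReal (Real.exp (-(t * ((n:ℝ) * (l:ℝ) * γ)))) with hεdef
  have hε0 : ε ≠ 0 := by
    simp only [hεdef, ne_eq, ENNReal.ofReal_eq_zero, not_le]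
    exact Real.exp_pos _
  have hεtop : ε ≠ ⊤ := ENNReal.ofReal_ne_top
  have hsub : {D : Fin n → Fin l → ℝ |
        (1 / ((n : ℝ) * (l : ℝ))) * ∑ i : Fin n, ∑ j : Fin l, (B i j - D i j) ^ 2 ≤ γ}
      ⊆ {D | ε ≤ g D} := by
    intro D hD
    simp only [Set.mem_setOf_eq] at hD ⊢
    rw [hgeq D, hεdef]
    apply ENNReal.ofReal_le_ofReal
    apply Real.exp_le_exp.mpr
    have hnl : (0:ℝ) < (n:ℝ) * (l:ℝ) := by positivity
    have hs : ∑ i : Fin n, ∑ j : Fin l, (B i j - D i j) ^ 2 ≤ (n:ℝ) * (l:ℝ) * γ := by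
      rw [div_mul_eq_mul_div, one_mul, div_le_iff₀ hnl] at hD
      linarith [hD]
    nlinarith [mul_le_mul_of_nonneg_left hs ht.le]
  have hμle : μ {D : Fin n → Fin l → ℝ |
        (1 / ((n : ℝ) * (l : ℝ))) * ∑ i : Fin n, ∑ j : Fin l, (B i j - D i j) ^ 2 ≤ γ}
      ≤ (∫⁻ D, g D ∂μ) / ε := by
    rw [ENNReal.le_div_iff_mul_le (Or.inl hε0) (Or.inl hεtop)]
    calc μ _ * ε ≤ μ {D | ε ≤ g D} * ε := mul_le_mul_left (measure_mono hsub) ε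
      _ = ε * μ {D | ε ≤ g D} := mul_comm _ _
      _ ≤ ∫⁻ D, g D ∂μ := mul_meas_ge_le_lintegral₀ hgm.aemeasurable ε
  refine le_trans hμle ?_
  -- compute the lintegral
  have hlint : ∫⁻ D, g D ∂μ = ∏ i : Fin n, ∏ j : Fin l,
      ENNReal.ofReal ((u j) ^ (-(1:ℝ)/2) * Real.exp (-(t * (B i j) ^ 2 / u j))) := by
    rw [hμdef, hgdef]
    rw [my_lintegral_pi_prod (fun _ : Fin n => Measure.pi fun j : Fin l =>
          gaussianReal 0 (if j ∈ S then θ j else 0))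
        (fun i (y : Fin l → ℝ) => ∏ j : Fin l,
          ENNReal.ofReal (Real.exp (-(t * (B i j - y j) ^ 2))))
        (fun i => Finset.measurable_prod _ fun j _ =>
          ENNReal.measurable_ofReal.comp (Real.measurable_exp.comp
            (by fun_prop)))]
    refine Finset.prod_congr rfl fun i _ => ?_
    rw [my_lintegral_pi_prod (fun j : Fin l => gaussianReal 0 (if j ∈ S then θ j else 0))
        (fun j (x : ℝ) => ENNReal.ofReal (Real.exp (-(t * (B i j - x) ^ 2))))
        (fun j => ENNReal.measurable_ofReal.comp (Real.measurable_exp.comp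
          (by fun_prop)))]
    exact Finset.prod_congr rfl fun j _ => entry_int t ht (B i j) _
  rw [hlint]
  -- pull `ofReal` out of the double product
  rw [show (∏ i : Fin n, ∏ j : Fin l,
        ENNReal.ofReal ((u j) ^ (-(1:ℝ)/2) * Real.exp (-(t * (B i j) ^ 2 / u j))))
      = ENNReal.ofReal (∏ i : Fin n, ∏ j : Fin l,
        (u j) ^ (-(1:ℝ)/2) * Real.exp (-(t * (B i j) ^ 2 / u j))) by
    rw [ENNReal.ofReal_prod_of_nonneg fun i _ =>
      Finset.prod_nonneg fun j _ => by positivity]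
    exact Finset.prod_congr rfl fun i _ =>
      (ENNReal.ofReal_prod_of_nonneg fun j _ => by positivity).symm]
  rw [hεdef, ← ENNReal.ofReal_div_of_pos (Real.exp_pos _)]
  apply ENNReal.ofReal_le_ofReal
  rw [div_eq_mul_inv, ← Real.exp_neg, neg_neg]
  -- per-column regrouping
  have hcol2 : ∀ j : Fin l, ∏ i : Fin n,
      ((u j) ^ (-(1:ℝ)/2) * Real.exp (-(t * (B i j) ^ 2 / u j)))
      = (u j ^ (-(1:ℝ)/2)) ^ n * Real.exp (-(1/(2*γ) * ((n:ℝ) * a j) / u j)) := by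
    intro j
    rw [Finset.prod_mul_distrib, Finset.prod_const, Finset.card_univ, Fintype.card_fin,
      ← Real.exp_sum]
    congr 2
    have hsq : ∑ i : Fin n, (B i j) ^ 2 = (n:ℝ) * a j := by
      rw [haval j]; field_simp
    rw [Finset.sum_neg_distrib]
    rw [show ∑ i : Fin n, t * (B i j) ^ 2 / u j = t * (∑ i : Fin n, (B i j) ^ 2) / u j by
      rw [Finset.mul_sum, Finset.sum_div]]
    rw [hsq, htdef]
  have hbound : ∏ i : Fin n, ∏ j : Fin l,
      ((u j) ^ (-(1:ℝ)/2) * Real.exp (-(t * (B i j) ^ 2 / u j)))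
      ≤ (γ/α) ^ (((n:ℝ) * (l:ℝ))/2) * Real.exp (-((n:ℝ)/2) * (l:ℝ)) := by
    rw [Finset.prod_comm]
    calc ∏ j : Fin l, ∏ i : Fin n,
          ((u j) ^ (-(1:ℝ)/2) * Real.exp (-(t * (B i j) ^ 2 / u j)))
        = ∏ j : Fin l, ((u j ^ (-(1:ℝ)/2)) ^ n
            * Real.exp (-(1/(2*γ) * ((n:ℝ) * a j) / u j))) :=
          Finset.prod_congr rfl fun j _ => hcol2 j
      _ ≤ ∏ j : Fin l, ((γ / a j) ^ ((n:ℝ)/2) * Real.exp (-((n:ℝ)/2))) := by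
          refine Finset.prod_le_prod (fun j _ => mul_nonneg
              (pow_nonneg (Real.rpow_nonneg (hu0 j).le _) n) (Real.exp_nonneg _)) fun j _ =>
            col_ineq n γ (a j) (u j) hγ0 (hapos j) (hu1 j)
      _ = (γ/α) ^ (((n:ℝ) * (l:ℝ))/2) * Real.exp (-((n:ℝ)/2) * (l:ℝ)) := by
          rw [Finset.prod_mul_distrib, Finset.prod_const, Finset.card_univ, Fintype.card_fin]
          congr 1
          · rw [Real.finset_prod_rpow _ _ (fun j _ => div_nonneg hγ0.le (hapos j).le) _]
            rw [show ∏ j : Fin l, γ / a j = (γ/α) ^ l by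
              rw [Finset.prod_div_distrib, Finset.prod_const, hprodα, Finset.card_univ,
                Fintype.card_fin, div_pow]]
            rw [← Real.rpow_natCast (γ/α) l, ← Real.rpow_mul (by positivity)]
            congr 1
            ring
          · rw [← Real.exp_nat_mul]
            congr 1
            ring
  calc (∏ i : Fin n, ∏ j : Fin l,
        ((u j) ^ (-(1:ℝ)/2) * Real.exp (-(t * (B i j) ^ 2 / u j))))
        * Real.exp (t * ((n:ℝ) * (l:ℝ) * γ))
      ≤ ((γ/α) ^ (((n:ℝ) * (l:ℝ))/2) * Real.exp (-((n:ℝ)/2) * (l:ℝ)))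
        * Real.exp (t * ((n:ℝ) * (l:ℝ) * γ)) :=
        mul_le_mul_of_nonneg_right hbound (Real.exp_nonneg _)
    _ = (γ/α) ^ (((n:ℝ) * (l:ℝ))/2) := by
        rw [show t * ((n:ℝ) * (l:ℝ) * γ) = (n:ℝ) * (l:ℝ) / 2 by
          rw [htdef]; field_simp]
        rw [mul_assoc, ← Real.exp_add,
          show -((n:ℝ)/2) * (l:ℝ) + (n:ℝ) * (l:ℝ) / 2 = 0 by ring, Real.exp_zero, mul_one]
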